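/- Let 𝓛 be a tame EALA with root system R, and let σ ∈ R⁰, α ∈ R× with α + σ ∈ R× and α − σ ∈ R×. Then ([𝓛_{α+σ}, 𝓛_{−α}], [𝓛_{α−σ}, 𝓛_{−α}]) ≠ 0, i.e., the form does not vanish on the pairing of these two subspaces of 𝓗. -/

import Mathlib

noncomputable section

variable {L : Type*} [LieRing L] [LieAlgebra ℂ L]

/-- The root space of `α : 𝓗* ` in `L` relative to the subalgebra `H`. -/
def rootSpace' (H : LieSubalgebra ℂ L) (α : Module.Dual ℂ H) : Submodule ℂ L where
  carrier := {x | ∀ h : H, ⁅(h : L), x⁆ = α h • x}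
  add_mem' := by
    intro a b ha hb
    intro h
    rw [lie_add, ha h, hb h, smul_add]
  zero_mem' := by intro h; simp
  smul_mem' := by
    intro c x hx
    intro h
    rw [lie_smul, hx h, smul_comm]

/-- The span of all brackets `[x, y]`, `x ∈ A`, `y ∈ B`. -/
def bracketSpan (A B : Submodule ℂ L) : Submodule ℂ L :=
  Submodule.span ℂ {z | ∃ x ∈ A, ∃ y ∈ B, z = ⁅x, y⁆}

/-- The set of roots of `(L, H)`. -/
def rootSet' (H : LieSubalgebra ℂ L) : Set (Module.Dual ℂ H) :=
  {α | rootSpace' H α ≠ ⊥}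

/-- Axioms (A1)–(A5) of an extended affine Lie algebra `(L, B, H)`; `t α` is the
element of `H` representing `α ∈ 𝓗*` via the form. -/
structure IsEALA (B : L →ₗ[ℂ] L →ₗ[ℂ] ℂ) (H : LieSubalgebra ℂ L)
    (t : Module.Dual ℂ H → L) : Prop where
  symm : ∀ x y, B x y = B y x
  invariant : ∀ x y z, B ⁅x, y⁆ z = B x ⁅y, z⁆
  nondeg : ∀ x, (∀ y, B x y = 0) → x = 0
  fd : FiniteDimensional ℂ H
  t_mem : ∀ α, t α ∈ H
  t_spec : ∀ (α : Module.Dual ℂ H) (h : H), α h = B (h : L) (t α)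
  /-- (A2): root space decomposition with respect to `H`, with `L₀ = H`. -/
  decomp : (⨆ α : Module.Dual ℂ H, rootSpace' H α) = ⊤
  zeroRoot : rootSpace' H (0 : Module.Dual ℂ H) = H.toSubmodule
  /-- (A3): non-isotropic root vectors act locally ad-nilpotently. -/
  adNilpotent : ∀ α ∈ rootSet' H, B (t α) (t α) ≠ 0 →
    ∀ x ∈ rootSpace' H α, ∀ y : L, ∃ n : ℕ, ((LieAlgebra.ad ℂ L x) ^ n) y = 0
  /-- (A4): the `ℤ`-span of the roots is free of finite rank. -/
  rootsFree : ∃ (n : ℕ) (b : Fin n → Module.Dual ℂ H),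
      AddSubgroup.closure (rootSet' H) = AddSubgroup.closure (Set.range b) ∧
      ∀ c : Fin n → ℤ, (∑ i, c i • b i) = 0 → ∀ i, c i = 0
  /-- (A5)(a): the non-isotropic roots are indecomposable. -/
  irred : ¬ ∃ A C : Set (Module.Dual ℂ H), A.Nonempty ∧ C.Nonempty ∧
      Disjoint A C ∧
      A ∪ C = {α ∈ rootSet' H | B (t α) (t α) ≠ 0} ∧
      ∀ a ∈ A, ∀ c ∈ C, B (t a) (t c) = 0
  /-- (A5)(b): the isotropic roots are non-isolated. -/
  nonisolated : ∀ δ ∈ rootSet' H, B (t δ) (t δ) = 0 →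
      ∃ α ∈ rootSet' H, ∃ β ∈ rootSet' H, B (t α) (t α) ≠ 0 ∧
        B (t β) (t β) ≠ 0 ∧ δ = α - β

/-- The non-isotropic roots. -/
def RxSet (B : L →ₗ[ℂ] L →ₗ[ℂ] ℂ) (H : LieSubalgebra ℂ L)
    (t : Module.Dual ℂ H → L) : Set (Module.Dual ℂ H) :=
  {α ∈ rootSet' H | B (t α) (t α) ≠ 0}

/-- The isotropic roots. -/
def R0Set (B : L →ₗ[ℂ] L →ₗ[ℂ] ℂ) (H : LieSubalgebra ℂ L)
    (t : Module.Dual ℂ H → L) : Set (Module.Dual ℂ H) :=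
  {α ∈ rootSet' H | B (t α) (t α) = 0}

/-- The core: the subalgebra generated by the non-isotropic root spaces. -/
def coreOf (B : L →ₗ[ℂ] L →ₗ[ℂ] ℂ) (H : LieSubalgebra ℂ L)
    (t : Module.Dual ℂ H → L) : LieSubalgebra ℂ L :=
  LieSubalgebra.lieSpan ℂ L (⋃ α ∈ RxSet B H t, (rootSpace' H α : Set L))

/-- Tameness: `(core)ᗮ ⊆ core`. -/
def IsTameEALA (B : L →ₗ[ℂ] L →ₗ[ℂ] ℂ) (H : LieSubalgebra ℂ L)
    (t : Module.Dual ℂ H → L) : Prop :=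
  ∀ x : L, (∀ y ∈ coreOf B H t, B x y = 0) → x ∈ coreOf B H t

section helpers
variable {B : L →ₗ[ℂ] L →ₗ[ℂ] ℂ} {H : LieSubalgebra ℂ L} {t : Module.Dual ℂ H → L}

lemma bracket_mem {ν μ : Module.Dual ℂ H} {x y : L}
    (hx : x ∈ rootSpace' H ν) (hy : y ∈ rootSpace' H μ) :
    ⁅x, y⁆ ∈ rootSpace' H (ν + μ) := by
  intro h
  rw [leibniz_lie, hx h, hy h, smul_lie, lie_smul, LinearMap.add_apply, add_smul]

lemma orth (hE : IsEALA B H t) {ν μ : Module.Dual ℂ H} {x y : L}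
    (hx : x ∈ rootSpace' H ν) (hy : y ∈ rootSpace' H μ) (hne : ν + μ ≠ 0) :
    B x y = 0 := by
  obtain ⟨h₀, hh₀⟩ := DFunLike.ne_iff.mp hne
  have hsum : ν h₀ + μ h₀ ≠ 0 := by simpa using hh₀
  have e1 : B ⁅x, (h₀ : L)⁆ y = B x ⁅(h₀ : L), y⁆ := hE.invariant x (h₀ : L) y
  have e2 : ⁅x, (h₀ : L)⁆ = -(ν h₀ • x) := by rw [← lie_skew, hx h₀]
  have eL : B ⁅x, (h₀ : L)⁆ y = -(ν h₀ * B x y) := by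
    rw [e2]; simp
  have eR : B x ⁅(h₀ : L), y⁆ = μ h₀ * B x y := by
    rw [hy h₀]; simp
  have key : (ν h₀ + μ h₀) * B x y = 0 := by
    rw [eL, eR] at e1; linear_combination -e1
  rcases mul_eq_zero.mp key with h | h
  · exact absurd h hsum
  · exact h

lemma eq_zero_of_orth (hE : IsEALA B H t) {x : L}
    (hx : ∀ (μ : Module.Dual ℂ H) (y : L), y ∈ rootSpace' H μ → B x y = 0) :
    x = 0 := by
  apply hE.nondeg
  intro y
  have hy : y ∈ ⨆ μ : Module.Dual ℂ H, rootSpace' H μ := by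
    rw [hE.decomp]; exact Submodule.mem_top
  refine Submodule.iSup_induction (motive := fun z => B x z = 0) _ hy
    (fun μ z hz => hx μ z hz) (by simp) (fun a b ha hb => by rw [map_add]; rw [ha, hb, add_zero])

lemma exists_pair (hE : IsEALA B H t) {ν : Module.Dual ℂ H} {x : L}
    (hx : x ∈ rootSpace' H ν) (hx0 : x ≠ 0) :
    ∃ y ∈ rootSpace' H (-ν), B x y ≠ 0 := by
  by_contra hc
  push_neg at hc
  apply hx0
  apply eq_zero_of_orth hE
  intro μ y hy
  by_cases hμ : ν + μ = 0
  · have hμ' : μ = -ν := by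
      have := eq_neg_of_add_eq_zero_right hμ
      exact this
    exact hc y (hμ' ▸ hy)
  · exact orth hE hx hy hμ

lemma span_one {ν : Module.Dual ℂ H}
    (hd : Module.finrank ℂ (rootSpace' H ν) = 1) {e : L}
    (he : e ∈ rootSpace' H ν) (he0 : e ≠ 0) :
    ∀ x ∈ rootSpace' H ν, ∃ c : ℂ, x = c • e := by
  intro x hx
  have hne : (⟨e, he⟩ : rootSpace' H ν) ≠ 0 := by
    simp only [ne_eq, Submodule.mk_eq_zero]; exact he0
  obtain ⟨c, hc⟩ := (finrank_eq_one_iff_of_nonzero' (⟨e, he⟩ : rootSpace' H ν) hne).mp hd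
    ⟨x, hx⟩
  refine ⟨c, ?_⟩
  have := congrArg (Subtype.val) hc
  simpa using this.symm

lemma lie_eq_form_smul_t (hE : IsEALA B H t) {ν : Module.Dual ℂ H} {e f : L}
    (he : e ∈ rootSpace' H ν) (hf : f ∈ rootSpace' H (-ν)) :
    ⁅e, f⁆ = (B e f) • t ν := by
  have hef : ⁅e, f⁆ ∈ rootSpace' H 0 := by
    have := bracket_mem he hf
    rwa [add_neg_cancel] at this
  have htν : t ν ∈ rootSpace' H 0 := by
    rw [hE.zeroRoot]; exact hE.t_mem ν
  have key : ∀ (μ : Module.Dual ℂ H) (y : L), y ∈ rootSpace' H μ →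
      B (⁅e, f⁆ - B e f • t ν) y = 0 := by
    intro μ y hy
    by_cases hμ : μ = 0
    · subst hμ
      have hyH : y ∈ H := by
        have : y ∈ H.toSubmodule := by rw [← hE.zeroRoot]; exact hy
        exact this
      set yH : H := ⟨y, hyH⟩ with hyHdef
      have h1 : B ⁅e, f⁆ y = ν yH * B e f := by
        rw [hE.invariant e f y]
        have hfy : ⁅f, (yH : L)⁆ = (ν yH) • f := by
          rw [← lie_skew, hf yH]
          simp
        have : (yH : L) = y := rfl
        rw [← this, hfy]
        simp [mul_comm]
      have h2 : B (t ν) y = ν yH := by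
        rw [hE.symm (t ν) y]
        exact (hE.t_spec ν yH).symm
      rw [map_sub, LinearMap.sub_apply, map_smul, LinearMap.smul_apply, h1, h2]
      simp [mul_comm]
    · exact orth hE (Submodule.sub_mem _ hef (Submodule.smul_mem _ _ htν)) hy
        (by rwa [zero_add])
  have := eq_zero_of_orth hE key
  exact sub_eq_zero.mp this

end helpers

lemma pow_app (F : Module.End ℂ L) (m : ℕ) (z : L) :
    (F ^ (m + 1)) z = (F ^ m) (F z) := by
  rw [pow_succ, Module.End.mul_apply]

lemma pow_app' (F : Module.End ℂ L) (m : ℕ) (z : L) :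
    (F ^ (m + 1)) z = F ((F ^ m) z) := by
  rw [pow_succ', Module.End.mul_apply]

/-- `[E, F^{n+1}] = (n+1) F^n (H - n)` applied to a vector. -/
lemma sl2_id1 (E F HHf : Module.End ℂ L)
    (hEF : ∀ z, E (F z) = F (E z) + HHf z)
    (hHF : ∀ z, HHf (F z) = F (HHf z) - (2:ℂ) • F z) :
    ∀ (n : ℕ) (y : L), E ((F ^ (n + 1)) y)
      = (F ^ (n + 1)) (E y) + ((n : ℂ) + 1) • ((F ^ n) (HHf y))
        - (((n : ℂ) + 1) * (n : ℂ)) • ((F ^ n) y) := by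
  intro n
  induction n with
  | zero => intro y; simpa using hEF y
  | succ n ih =>
    intro y
    rw [pow_app F (n+1) y, ih (F y), hEF y, hHF y]
    simp only [map_add, map_sub, map_smul]
    rw [← pow_app F (n+1) (E y), ← pow_app F n (HHf y), ← pow_app F n y]
    push_cast
    module

/-- `[F, E^{n+1}] = -(n+1) E^n (H + n)` applied to a vector. -/
lemma sl2_id2 (E F HHf : Module.End ℂ L)
    (hEF : ∀ z, E (F z) = F (E z) + HHf z)
    (hHE : ∀ z, HHf (E z) = E (HHf z) + (2:ℂ) • E z) :
    ∀ (n : ℕ) (y : L), F ((E ^ (n + 1)) y)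
      = (E ^ (n + 1)) (F y) - ((n : ℂ) + 1) • ((E ^ n) (HHf y))
        - (((n : ℂ) + 1) * (n : ℂ)) • ((E ^ n) y) := by
  intro n
  induction n with
  | zero =>
    intro y
    simp only [pow_one, pow_zero, Module.End.one_apply, Nat.cast_zero, zero_add,
      one_smul, mul_zero, zero_smul, sub_zero]
    rw [hEF y]
    abel
  | succ n ih =>
    intro y
    have hFE : ∀ z, F (E z) = E (F z) - HHf z := fun z => by rw [hEF z]; abel
    rw [pow_app E (n+1) y, ih (E y), hFE y, hHE y]
    simp only [map_add, map_sub, map_smul]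
    rw [← pow_app E (n+1) (F y), ← pow_app E n (HHf y), ← pow_app E n y]
    push_cast
    module

/-- `H F^n = F^n H - 2n F^n` applied to a vector. -/
lemma sl2_id3 (F HHf : Module.End ℂ L)
    (hHF : ∀ z, HHf (F z) = F (HHf z) - (2:ℂ) • F z) :
    ∀ (n : ℕ) (y : L), HHf ((F ^ n) y)
      = (F ^ n) (HHf y) - (2 * (n : ℂ)) • ((F ^ n) y) := by
  intro n
  induction n with
  | zero => intro y; simp
  | succ n ih =>
    intro y
    rw [pow_app F n y, ih (F y), hHF y]
    simp only [map_add, map_sub, map_smul]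
    rw [← pow_app F n (HHf y), ← pow_app F n y]
    push_cast
    module

lemma exists_top_pow {E : Module.End ℂ L} {y : L} (hy : y ≠ 0)
    (hnil : ∃ n, (E ^ n) y = 0) :
    ∃ N : ℕ, (E ^ N) y ≠ 0 ∧ (E ^ (N + 1)) y = 0 := by
  classical
  have hm := Nat.find_spec hnil
  have hm0 : Nat.find hnil ≠ 0 := by
    intro h
    rw [h, pow_zero, Module.End.one_apply] at hm
    exact hy hm
  refine ⟨Nat.find hnil - 1, Nat.find_min hnil (by omega), ?_⟩
  have heq : Nat.find hnil - 1 + 1 = Nat.find hnil := by omega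
  rw [heq]
  exact hm

/-- A vector killed by `F` with weight `c` has `c = -N` for a natural number `N`;
moreover if `c = 0` then it is also killed by `E`. -/
lemma lowest_weight (E F HHf : Module.End ℂ L)
    (hEF : ∀ z, E (F z) = F (E z) + HHf z)
    (hHE : ∀ z, HHf (E z) = E (HHf z) + (2:ℂ) • E z)
    {y : L} {c : ℂ} (hy0 : y ≠ 0) (hFy : F y = 0) (hHy : HHf y = c • y)
    (hnil : ∃ n, (E ^ n) y = 0) :
    (∃ N : ℕ, c = -(N : ℂ)) ∧ (c = 0 → E y = 0) := by
  obtain ⟨N, hN0, hN1⟩ := exists_top_pow hy0 hnil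
  have key := sl2_id2 E F HHf hEF hHE N y
  rw [hN1, hFy, hHy, map_zero, map_zero, map_smul] at key
  have key2 : (0 : L) = -((((N:ℂ)+1) * (c + (N:ℂ))) • ((E ^ N) y)) := by
    rw [key]; module
  have key3 : (((N:ℂ)+1) * (c + (N:ℂ))) • ((E ^ N) y) = 0 := by
    rw [eq_comm, neg_eq_iff_eq_neg, neg_zero] at key2; exact key2
  have hco : ((N:ℂ)+1) * (c + (N:ℂ)) = 0 := by
    rcases smul_eq_zero.mp key3 with h | h
    · exact h
    · exact absurd h hN0
  have hNne : ((N:ℂ)+1) ≠ 0 := by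
    intro h
    have : ((N+1 : ℕ) : ℂ) = 0 := by push_cast; linear_combination h
    exact Nat.succ_ne_zero N (by exact_mod_cast this)
  have hc : c = -(N:ℂ) := by
    rcases mul_eq_zero.mp hco with h | h
    · exact absurd h hNne
    · linear_combination h
  constructor
  · exact ⟨N, hc⟩
  · intro hc0
    have : (N : ℂ) = 0 := by rw [hc0] at hc; linear_combination hc
    have hN : N = 0 := by exact_mod_cast this
    rw [hN, zero_add, pow_one] at hN1
    exact hN1

lemma chain_step (E F HHf : Module.End ℂ L)
    (hEF : ∀ z, E (F z) = F (E z) + HHf z)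
    (hHE : ∀ z, HHf (E z) = E (HHf z) + (2:ℂ) • E z)
    (hHF : ∀ z, HHf (F z) = F (HHf z) - (2:ℂ) • F z)
    (hnilE : ∀ z : L, ∃ n, (E ^ n) z = 0)
    (k : ℕ) (q : L) (hq1 : HHf q = (2 * ((k:ℂ)+1)) • q)
    (hq2 : (F ^ (k+1)) q ≠ 0) (hq3 : (F ^ (k+2)) q = 0) :
    HHf (E q) = (2 * ((k:ℂ)+2)) • (E q) ∧ (F ^ (k+2)) (E q) ≠ 0 ∧
      (F ^ (k+3)) (E q) = 0 := by
  have hz0 : (F ^ (k+1)) q ≠ 0 := hq2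
  have hFz : F ((F ^ (k+1)) q) = 0 := by rw [← pow_app' F (k+1) q]; exact hq3
  have hHz : HHf ((F ^ (k+1)) q) = (0:ℂ) • ((F ^ (k+1)) q) := by
    rw [sl2_id3 F HHf hHF (k+1) q, hq1, map_smul]
    push_cast
    module
  have hEz : E ((F ^ (k+1)) q) = 0 :=
    (lowest_weight E F HHf hEF hHE hz0 hFz hHz (hnilE _)).2 rfl
  -- sl2_id1 at n = k applied to q
  have key := sl2_id1 E F HHf hEF hHF k q
  rw [hEz, hq1, map_smul] at key
  have hFk1Eq : (F ^ (k+1)) (E q) = -(((k:ℂ)+1) * ((k:ℂ)+2)) • ((F ^ k) q) := by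
    linear_combination (norm := module) -key
  have hco : (((k:ℂ)+1) * ((k:ℂ)+2)) ≠ 0 := by
    have h1 : ((k:ℂ)+1) ≠ 0 := by
      intro h
      have : ((k+1 : ℕ) : ℂ) = 0 := by push_cast; linear_combination h
      exact Nat.succ_ne_zero k (by exact_mod_cast this)
    have h2 : ((k:ℂ)+2) ≠ 0 := by
      intro h
      have : ((k+2 : ℕ) : ℂ) = 0 := by push_cast; linear_combination h
      exact Nat.succ_ne_zero (k+1) (by exact_mod_cast this)
    exact mul_ne_zero h1 h2
  refine ⟨?_, ?_, ?_⟩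
  · rw [hHE q, hq1, map_smul]
    push_cast
    module
  · rw [pow_app' F (k+1) (E q), hFk1Eq, map_smul, ← pow_app' F k q]
    simp only [ne_eq, smul_eq_zero, neg_eq_zero, not_or]
    exact ⟨hco, hq2⟩
  · rw [pow_app' F (k+2) (E q), pow_app' F (k+1) (E q), hFk1Eq, map_smul, map_smul,
      ← pow_app' F k q, ← pow_app' F (k+1) q]
    show -(((k:ℂ)+1) * ((k:ℂ)+2)) • ((F ^ (k+2)) q) = 0
    rw [hq3, smul_zero]

lemma chain (E F HHf : Module.End ℂ L)
    (hEF : ∀ z, E (F z) = F (E z) + HHf z)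
    (hHE : ∀ z, HHf (E z) = E (HHf z) + (2:ℂ) • E z)
    (hHF : ∀ z, HHf (F z) = F (HHf z) - (2:ℂ) • F z)
    (hnilE : ∀ z : L, ∃ n, (E ^ n) z = 0)
    (k : ℕ) (q : L) (hq1 : HHf q = (2 * ((k:ℂ)+1)) • q)
    (hq2 : (F ^ (k+1)) q ≠ 0) (hq3 : (F ^ (k+2)) q = 0) : False := by
  have main : ∀ n : ℕ, HHf ((E ^ n) q) = (2 * ((k+n : ℕ):ℂ)+2) • ((E ^ n) q) ∧
      (F ^ (k+n+1)) ((E ^ n) q) ≠ 0 ∧ (F ^ (k+n+2)) ((E ^ n) q) = 0 := by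
    intro n
    induction n with
    | zero =>
      refine ⟨?_, by simpa using hq2, by simpa using hq3⟩
      simp only [pow_zero, Module.End.one_apply, Nat.add_zero]
      rw [hq1]; push_cast; module
    | succ n ih =>
      obtain ⟨ih1, ih2, ih3⟩ := ih
      have ih1' : HHf ((E ^ n) q) = (2 * (((k+n:ℕ):ℂ))+2) • ((E ^ n) q) := ih1
      have step := chain_step E F HHf hEF hHE hHF hnilE (k+n) ((E ^ n) q)
        (by rw [ih1']; push_cast; module) ih2 ih3
      obtain ⟨s1, s2, s3⟩ := step
      have hEpow : (E ^ (n+1)) q = E ((E ^ n) q) := pow_app' E n q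
      refine ⟨?_, ?_, ?_⟩
      · rw [hEpow, s1]; push_cast; module
      · rw [hEpow]
        have : k + (n+1) + 1 = (k+n) + 2 := by omega
        rw [this]; exact s2
      · rw [hEpow]
        have : k + (n+1) + 2 = (k+n) + 3 := by omega
        rw [this]; exact s3
  obtain ⟨n, hn⟩ := hnilE q
  have := (main n).2.1
  rw [hn, map_zero] at this
  exact this rfl


/-- for a tame EALA `L`, `σ ∈ R⁰` and `α ∈ R×` with
`α ± σ ∈ R×`, the form does not vanish on the pairing of
`[L_{α+σ}, L_{−α}]` and `[L_{α−σ}, L_{−α}]`. -/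
theorem stmt_9 {L : Type*} [LieRing L] [LieAlgebra ℂ L]
    (B : L →ₗ[ℂ] L →ₗ[ℂ] ℂ) (H : LieSubalgebra ℂ L)
    (t : Module.Dual ℂ H → L)
    (hE : IsEALA B H t) (htame : IsTameEALA B H t)
    (h1dim : ∀ β ∈ RxSet B H t, Module.finrank ℂ (rootSpace' H β) = 1)
    (σa α : Module.Dual ℂ H)
    (hσ : σa ∈ R0Set B H t) (hα : α ∈ RxSet B H t)
    (h1 : α + σa ∈ RxSet B H t) (h2 : α - σa ∈ RxSet B H t) :
    ∃ x ∈ bracketSpan (rootSpace' H (α + σa)) (rootSpace' H (-α)),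
      ∃ y ∈ bracketSpan (rootSpace' H (α - σa)) (rootSpace' H (-α)),
        B x y ≠ 0 := by
  classical
  obtain ⟨hαR, ha⟩ := hα
  obtain ⟨hβR, hb⟩ := h1
  obtain ⟨hγR, hg⟩ := h2
  obtain ⟨e, he, he0⟩ := (Submodule.ne_bot_iff _).mp hαR
  obtain ⟨eb, hbmem, hb0⟩ := (Submodule.ne_bot_iff _).mp hβR
  obtain ⟨eg, hgmem, hg0⟩ := (Submodule.ne_bot_iff _).mp hγR
  obtain ⟨f₀, hf₀, hBef₀⟩ := exists_pair hE he he0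
  set a := B (t α) (t α) with hadef
  set c₀ := B e f₀ with hc₀def
  set f : L := (2 / (c₀ * a)) • f₀ with hfdef
  have hf : f ∈ rootSpace' H (-α) := Submodule.smul_mem _ _ hf₀
  have hBef : B e f = 2 / a := by
    rw [hfdef, map_smul, smul_eq_mul, ← hc₀def]
    field_simp
  have hef : ⁅e, f⁆ = (2 / a) • t α := by
    rw [lie_eq_form_smul_t hE he hf, hBef]
  have hLH : ⁅e, f⁆ ∈ H := by
    rw [hef]; exact H.smul_mem _ (hE.t_mem α)
  set hH : H := ⟨⁅e, f⁆, hLH⟩ with hHdef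
  have hα2 : α hH = 2 := by
    rw [hE.t_spec α hH]
    show B ⁅e, f⁆ (t α) = 2
    rw [hef, map_smul, LinearMap.smul_apply, smul_eq_mul, ← hadef]
    field_simp
  set s := σa hH with hsdef
  set E : Module.End ℂ L := LieAlgebra.ad ℂ L e with hEdef
  set F : Module.End ℂ L := LieAlgebra.ad ℂ L f with hFdef
  set HHf : Module.End ℂ L := LieAlgebra.ad ℂ L ⁅e, f⁆ with hHHdef
  have hEap : ∀ z, E z = ⁅e, z⁆ := fun z => by rw [hEdef, LieAlgebra.ad_apply]
  have hFap : ∀ z, F z = ⁅f, z⁆ := fun z => by rw [hFdef, LieAlgebra.ad_apply]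
  have hHap : ∀ z, HHf z = ⁅⁅e, f⁆, z⁆ := fun z => by rw [hHHdef, LieAlgebra.ad_apply]
  have hhe : ⁅⁅e, f⁆, e⁆ = (2:ℂ) • e := by
    have h' := he hH
    rw [hα2] at h'
    exact h'
  have hhf : ⁅⁅e, f⁆, f⁆ = (-2:ℂ) • f := by
    have h' := hf hH
    rw [LinearMap.neg_apply, hα2] at h'
    exact h'
  have hEF : ∀ z, E (F z) = F (E z) + HHf z := by
    intro z
    rw [hEap, hFap, hFap, hEap, hHap, leibniz_lie e f z]
    abel
  have hHE : ∀ z, HHf (E z) = E (HHf z) + (2:ℂ) • E z := by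
    intro z
    rw [hHap, hEap, hEap, hHap, leibniz_lie ⁅e, f⁆ e z, hhe, smul_lie]
    abel
  have hHF : ∀ z, HHf (F z) = F (HHf z) - (2:ℂ) • F z := by
    intro z
    rw [hHap, hFap, hFap, hHap, leibniz_lie ⁅e, f⁆ f z, hhf, smul_lie]
    module
  have hnilE : ∀ z : L, ∃ n, (E ^ n) z = 0 := fun z => hE.adNilpotent α hαR ha e he z
  refine ⟨⁅eb, f⁆, Submodule.subset_span ⟨eb, hbmem, f, hf, rfl⟩,
    ⁅eg, f⁆, Submodule.subset_span ⟨eg, hgmem, f, hf, rfl⟩, ?_⟩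
  intro hP
  -- step 1 : F² eg = 0 and F² eb = 0
  have hFg2 : F (F eg) = 0 := by
    have humem : ⁅f, ⁅f, eg⁆⁆ ∈ rootSpace' H (-(α + σa)) := by
      have m1 : ⁅f, eg⁆ ∈ rootSpace' H (-α + (α - σa)) := bracket_mem hf hgmem
      have m2 : ⁅f, ⁅f, eg⁆⁆ ∈ rootSpace' H (-α + (-α + (α - σa))) := bracket_mem hf m1
      have heq : -α + (-α + (α - σa)) = -(α + σa) := by abel
      rwa [heq] at m2
    have hBu : B eb ⁅f, ⁅f, eg⁆⁆ = 0 := by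
      have hinv : B ⁅eb, f⁆ ⁅eg, f⁆ = B eb ⁅f, ⁅eg, f⁆⁆ := hE.invariant eb f ⁅eg, f⁆
      have hsk : ⁅f, ⁅eg, f⁆⁆ = -⁅f, ⁅f, eg⁆⁆ := by rw [← lie_skew eg f, lie_neg]
      rw [hsk, map_neg, hP] at hinv
      exact neg_eq_zero.mp hinv.symm
    have hu0 : ⁅f, ⁅f, eg⁆⁆ = 0 := by
      apply eq_zero_of_orth hE
      intro μ y hy
      by_cases hμ : μ = α + σa
      · subst hμ
        obtain ⟨c, hc⟩ := span_one (h1dim _ ⟨hβR, hb⟩) hbmem hb0 y hy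
        rw [hc, map_smul, smul_eq_mul, hE.symm _ eb, hBu, mul_zero]
      · exact orth hE humem hy (fun hq => hμ ((neg_add_eq_zero.mp hq).symm))
    rw [hFap, hFap]
    exact hu0
  have hFb2 : F (F eb) = 0 := by
    have humem : ⁅f, ⁅f, eb⁆⁆ ∈ rootSpace' H (-(α - σa)) := by
      have m1 : ⁅f, eb⁆ ∈ rootSpace' H (-α + (α + σa)) := bracket_mem hf hbmem
      have m2 : ⁅f, ⁅f, eb⁆⁆ ∈ rootSpace' H (-α + (-α + (α + σa))) := bracket_mem hf m1
      have heq : -α + (-α + (α + σa)) = -(α - σa) := by abel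
      rwa [heq] at m2
    have hBu : B eg ⁅f, ⁅f, eb⁆⁆ = 0 := by
      have hinv : B ⁅eg, f⁆ ⁅eb, f⁆ = B eg ⁅f, ⁅eb, f⁆⁆ := hE.invariant eg f ⁅eb, f⁆
      have hsk : ⁅f, ⁅eb, f⁆⁆ = -⁅f, ⁅f, eb⁆⁆ := by rw [← lie_skew eb f, lie_neg]
      have hP' : B ⁅eg, f⁆ ⁅eb, f⁆ = 0 := by rw [hE.symm]; exact hP
      rw [hsk, map_neg, hP'] at hinv
      exact neg_eq_zero.mp hinv.symm
    have hu0 : ⁅f, ⁅f, eb⁆⁆ = 0 := by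
      apply eq_zero_of_orth hE
      intro μ y hy
      by_cases hμ : μ = α - σa
      · subst hμ
        obtain ⟨c, hc⟩ := span_one (h1dim _ ⟨hγR, hg⟩) hgmem hg0 y hy
        rw [hc, map_smul, smul_eq_mul, hE.symm _ eg, hBu, mul_zero]
      · exact orth hE humem hy (fun hq => hμ ((neg_add_eq_zero.mp hq).symm))
    rw [hFap, hFap]
    exact hu0
  -- weights
  have wγ : HHf eg = ((2:ℂ) - s) • eg := by
    have h' := hgmem hH
    rw [LinearMap.sub_apply, hα2] at h'
    rw [hHap]
    exact h'
  have wβ : HHf eb = ((2:ℂ) + s) • eb := by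
    have h' := hbmem hH
    rw [LinearMap.add_apply, hα2] at h'
    rw [hHap]
    exact h'
  -- case analysis
  have caseγ : (∃ N : ℕ, (2:ℂ) - s = -(N:ℂ)) ∨
      ((∃ N : ℕ, -s = -(N:ℂ)) ∧ (s = 0 → E (F eg) = 0) ∧ F eg ≠ 0) := by
    by_cases hFg : F eg = 0
    · exact Or.inl (lowest_weight E F HHf hEF hHE hg0 hFg wγ (hnilE _)).1
    · right
      have hw : HHf (F eg) = (-s) • (F eg) := by
        rw [hHF eg, wγ, map_smul]
        module
      have hres := lowest_weight E F HHf hEF hHE hFg hFg2 hw (hnilE _)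
      exact ⟨hres.1, fun hs0 => hres.2 (by rw [hs0, neg_zero]), hFg⟩
  have caseβ : (∃ M : ℕ, (2:ℂ) + s = -(M:ℂ)) ∨ (∃ M : ℕ, s = -(M:ℂ)) := by
    by_cases hFb : F eb = 0
    · exact Or.inl (lowest_weight E F HHf hEF hHE hb0 hFb wβ (hnilE _)).1
    · right
      have hw : HHf (F eb) = s • (F eb) := by
        rw [hHF eb, wβ, map_smul]
        module
      exact (lowest_weight E F HHf hEF hHE hFb hFb2 hw (hnilE _)).1
  have hs0 : s = 0 ∧ E (F eg) = 0 ∧ F eg ≠ 0 := by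
    rcases caseγ with ⟨N, hN⟩ | ⟨⟨N, hN⟩, hbonus, hFg⟩
    · exfalso
      rcases caseβ with ⟨M, hM⟩ | ⟨M, hM⟩
      · have hcast : ((N + M + 4 : ℕ) : ℂ) = 0 := by push_cast; linear_combination hN + hM
        have : N + M + 4 = 0 := by exact_mod_cast hcast
        omega
      · have hcast : ((N + M + 2 : ℕ) : ℂ) = 0 := by push_cast; linear_combination hN + hM
        have : N + M + 2 = 0 := by exact_mod_cast hcast
        omega
    · rcases caseβ with ⟨M, hM⟩ | ⟨M, hM⟩
      · exfalso
        have hcast : ((N + M + 2 : ℕ) : ℂ) = 0 := by push_cast; linear_combination hN + hM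
        have : N + M + 2 = 0 := by exact_mod_cast hcast
        omega
      · have hNM : ((N + M : ℕ) : ℂ) = 0 := by push_cast; linear_combination hN + hM
        have hNM' : N + M = 0 := by exact_mod_cast hNM
        have hs : s = 0 := by
          have hM0 : M = 0 := by omega
          rw [hM0] at hM
          simpa using hM
        exact ⟨hs, hbonus hs, hFg⟩
  obtain ⟨hs, hEFg, hFg⟩ := hs0
  -- build the ascending chain from q = E eg
  have hq1 : HHf (E eg) = (2 * ((1:ℕ):ℂ) + 2) • (E eg) := by
    rw [hHE eg, wγ, hs, map_smul]
    push_cast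
    module
  have hFq : F (E eg) = (-2:ℂ) • eg := by
    have h' := hEF eg
    rw [hEFg, wγ, hs] at h'
    linear_combination (norm := module) -h'
  have hpow2 : (F ^ 2) (E eg) = F (F (E eg)) := by
    rw [pow_two, Module.End.mul_apply]
  have hq2 : (F ^ 2) (E eg) ≠ 0 := by
    rw [hpow2, hFq, map_smul]
    simp only [ne_eq, smul_eq_zero, neg_eq_zero, not_or]
    refine ⟨by norm_num, hFg⟩
  have hq3 : (F ^ 3) (E eg) = 0 := by
    have hpow3 : (F ^ 3) (E eg) = F ((F ^ 2) (E eg)) := pow_app' F 2 (E eg)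
    rw [hpow3, hpow2, hFq, map_smul, map_smul, hFg2]
    simp
  have hq1' : HHf (E eg) = (2 * (((1:ℕ):ℂ) + 1)) • (E eg) := by
    rw [hq1]; push_cast; module
  exact chain E F HHf hEF hHE hHF hnilE 1 (E eg) hq1' hq2 hq3
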